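/- The logic CK ⊕ C_◇ ⊕ N_◇ is a conservative extension of the diamond-free logic: for every set Γ of formulas and formula φ all of which contain no occurrence of ◇, we have Γ ⊢_{CK ⊕ C_◇ ⊕ N_◇} φ if and only if Γ ⊢_CK φ. -/

import Mathlib

/-- Formulas of the modal language L. -/
inductive Form : Type
  | var : ℕ → Form
  | bot : Form
  | and : Form → Form → Form
  | or : Form → Form → Form
  | imp : Form → Form → Form
  | box : Form → Form
  | dia : Form → Form

namespace Form

/-- Negation abbreviation: ¬φ := φ → ⊥. -/
def neg (φ : Form) : Form := φ.imp bot

/-- Uniform substitution. -/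
def subst (σ : ℕ → Form) : Form → Form
  | var p => σ p
  | bot => bot
  | and a b => and (a.subst σ) (b.subst σ)
  | or a b => or (a.subst σ) (b.subst σ)
  | imp a b => imp (a.subst σ) (b.subst σ)
  | box a => box (a.subst σ)
  | dia a => dia (a.subst σ)

end Form

/-- Substitution instances of the axioms of a standard Hilbert axiomatisation
of intuitionistic propositional logic (the axioms are schematic, so all
substitution instances are included). -/
inductive IPLAx : Form → Prop
  | a1 (φ ψ : Form) : IPLAx (φ.imp (ψ.imp φ))
  | a2 (φ ψ χ : Form) : IPLAx ((φ.imp (ψ.imp χ)).imp ((φ.imp ψ).imp (φ.imp χ)))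
  | a3 (φ ψ : Form) : IPLAx ((φ.and ψ).imp φ)
  | a4 (φ ψ : Form) : IPLAx ((φ.and ψ).imp ψ)
  | a5 (φ ψ : Form) : IPLAx (φ.imp (ψ.imp (φ.and ψ)))
  | a6 (φ ψ : Form) : IPLAx (φ.imp (φ.or ψ))
  | a7 (φ ψ : Form) : IPLAx (ψ.imp (φ.or ψ))
  | a8 (φ ψ χ : Form) : IPLAx ((φ.imp χ).imp ((ψ.imp χ).imp ((φ.or ψ).imp χ)))
  | a9 (φ : Form) : IPLAx (Form.bot.imp φ)

/-- Substitution instances of K_□ : □(φ→ψ) → (□φ → □ψ). -/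
def KBoxAx (χ : Form) : Prop :=
  ∃ φ ψ : Form, χ = ((φ.imp ψ).box).imp ((φ.box).imp (ψ.box))

/-- Substitution instances of K_◇ : □(φ→ψ) → (◇φ → ◇ψ). -/
def KDiaAx (χ : Form) : Prop :=
  ∃ φ ψ : Form, χ = ((φ.imp ψ).box).imp ((φ.dia).imp (ψ.dia))

/-- Axiom instances available in the calculus CK ⊕ Ax : instances of IPL
axioms, of K_□, of K_◇, or substitution instances of members of Ax. -/
def AxInst (Ax : Set Form) (φ : Form) : Prop :=
  IPLAx φ ∨ KBoxAx φ ∨ KDiaAx φ ∨ ∃ ψ ∈ Ax, ∃ σ : ℕ → Form, φ = ψ.subst σ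

/-- The generalised Hilbert calculus CK ⊕ Ax deriving consecutions Γ ⊢_Ax φ:
rules (Ax), (MP), (Nec) and (El). -/
inductive Prv (Ax : Set Form) : Set Form → Form → Prop
  | ax {Γ : Set Form} {φ : Form} : AxInst Ax φ → Prv Ax Γ φ
  | mp {Γ : Set Form} {φ ψ : Form} : Prv Ax Γ φ → Prv Ax Γ (φ.imp ψ) → Prv Ax Γ ψ
  | nec {Γ : Set Form} {φ : Form} : Prv Ax ∅ φ → Prv Ax Γ φ.box
  | el {Γ : Set Form} {φ : Form} : φ ∈ Γ → Prv Ax Γ φ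

/-- The axiom N_◇ : ◇⊥ → ⊥. -/
def NdAx : Form := (Form.bot.dia).imp Form.bot

/-- The axiom N_◇□ : ◇⊥ → □⊥. -/
def NdbAx : Form := (Form.bot.dia).imp (Form.bot.box)

/-- The axiom C_◇ : ◇(p ∨ q) → ◇p ∨ ◇q. -/
def CdAx : Form :=
  (((Form.var 0).or (Form.var 1)).dia).imp (((Form.var 0).dia).or ((Form.var 1).dia))

/-- The axiom I_◇□ : (◇p → □q) → □(p → q). -/
def IdbAx : Form :=
  (((Form.var 0).dia).imp ((Form.var 1).box)).imp (((Form.var 0).imp (Form.var 1)).box)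

/-- A formula is diamond-free if it contains no occurrence of ◇. -/
def DiamondFree : Form → Prop
  | .var _ => True
  | .bot => True
  | .and a b => DiamondFree a ∧ DiamondFree b
  | .or a b => DiamondFree a ∧ DiamondFree b
  | .imp a b => DiamondFree a ∧ DiamondFree b
  | .box a => DiamondFree a
  | .dia _ => False

/-- Translation erasing diamonds: ◇ψ ↦ ⊥. -/
def tr : Form → Form
  | .var p => .var p
  | .bot => .bot
  | .and a b => .and (tr a) (tr b)
  | .or a b => .or (tr a) (tr b)
  | .imp a b => .imp (tr a) (tr b)
  | .box a => .box (tr a)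
  | .dia _ => .bot

lemma tr_of_df : ∀ φ : Form, DiamondFree φ → tr φ = φ
  | .var _, _ => rfl
  | .bot, _ => rfl
  | .and a b, h => by simp [tr, tr_of_df a h.1, tr_of_df b h.2]
  | .or a b, h => by simp [tr, tr_of_df a h.1, tr_of_df b h.2]
  | .imp a b, h => by simp [tr, tr_of_df a h.1, tr_of_df b h.2]
  | .box a, h => by simp [tr, tr_of_df a h]
  | .dia _, h => absurd h (by simp [DiamondFree])

lemma tr_subst (σ : ℕ → Form) : ∀ φ : Form, tr (φ.subst σ) = (tr φ).subst (fun p => tr (σ p))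
  | .var p => rfl
  | .bot => rfl
  | .and a b => by simp [Form.subst, tr, tr_subst σ a, tr_subst σ b]
  | .or a b => by simp [Form.subst, tr, tr_subst σ a, tr_subst σ b]
  | .imp a b => by simp [Form.subst, tr, tr_subst σ a, tr_subst σ b]
  | .box a => by simp [Form.subst, tr, tr_subst σ a]
  | .dia a => rfl

lemma prv_mono {Ax : Set Form} {Γ : Set Form} {φ : Form} (h : Prv ∅ Γ φ) : Prv Ax Γ φ := by
  induction h with
  | ax h =>
    apply Prv.ax
    rcases h with h | h | h | ⟨ψ, hψ, _⟩
    · exact Or.inl h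
    · exact Or.inr (Or.inl h)
    · exact Or.inr (Or.inr (Or.inl h))
    · exact absurd hψ (Set.notMem_empty ψ)
  | mp _ _ ih1 ih2 => exact Prv.mp ih1 ih2
  | nec _ ih => exact Prv.nec ih
  | el h => exact Prv.el h

lemma prv_bot_imp {Γ : Set Form} (φ : Form) : Prv ∅ Γ (Form.bot.imp φ) :=
  Prv.ax (Or.inl (IPLAx.a9 φ))

/-- main translation lemma -/
lemma tr_prv {Γ : Set Form} {φ : Form} (h : Prv {CdAx, NdAx} Γ φ) :
    Prv ∅ (tr '' Γ) (tr φ) := by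
  induction h with
  | @ax Γ φ h =>
    rcases h with h | ⟨a, b, rfl⟩ | ⟨a, b, rfl⟩ | ⟨ψ, hψ, σ, rfl⟩
    · -- IPL axioms are schematic, tr commutes
      cases h <;> exact Prv.ax (Or.inl (by first
        | exact IPLAx.a1 _ _ | exact IPLAx.a2 _ _ _ | exact IPLAx.a3 _ _
        | exact IPLAx.a4 _ _ | exact IPLAx.a5 _ _ | exact IPLAx.a6 _ _
        | exact IPLAx.a7 _ _ | exact IPLAx.a8 _ _ _ | exact IPLAx.a9 _))
    · exact Prv.ax (Or.inr (Or.inl ⟨tr a, tr b, rfl⟩))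
    · -- K_◇ translates to □(tr a → tr b) → (⊥ → ⊥)
      show Prv ∅ _ ((((tr a).imp (tr b)).box).imp (Form.bot.imp Form.bot))
      have h1 : Prv ∅ (tr '' Γ) (Form.bot.imp Form.bot) := prv_bot_imp _
      have h2 : Prv ∅ (tr '' Γ)
          ((Form.bot.imp Form.bot).imp ((((tr a).imp (tr b)).box).imp (Form.bot.imp Form.bot))) :=
        Prv.ax (Or.inl (IPLAx.a1 _ _))
      exact Prv.mp h1 h2
    · rcases hψ with rfl | rfl
      · -- Cd instance translates to ⊥ → ⊥ ∨ ⊥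
        show Prv ∅ _ (tr (CdAx.subst σ))
        simp only [CdAx, Form.subst, tr]
        exact prv_bot_imp _
      · show Prv ∅ _ (tr (NdAx.subst σ))
        simp only [NdAx, Form.subst, tr]
        exact prv_bot_imp _
  | mp _ _ ih1 ih2 => exact Prv.mp ih1 ih2
  | nec _ ih => simpa [Set.image_empty, tr] using Prv.nec (Γ := tr '' _) (by simpa using ih)
  | el h => exact Prv.el ⟨_, h, rfl⟩

/-- CK ⊕ C_◇ ⊕ N_◇ is conservative over the diamond-free fragment of CK. -/
theorem ck_cd_nd_conservative (Γ : Set Form) (φ : Form)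
    (hΓ : ∀ ψ ∈ Γ, DiamondFree ψ) (hφ : DiamondFree φ) :
    Prv {CdAx, NdAx} Γ φ ↔ Prv ∅ Γ φ := by
  constructor
  · intro h
    have := tr_prv h
    rw [tr_of_df φ hφ] at this
    have himg : tr '' Γ = Γ := by
      ext ψ
      constructor
      · rintro ⟨χ, hχ, rfl⟩; rwa [tr_of_df χ (hΓ χ hχ)]
      · intro hψ; exact ⟨ψ, hψ, tr_of_df ψ (hΓ ψ hψ)⟩
    rwa [himg] at this
  · exact prv_mono
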